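/- If I is an ideal of a polynomial ring generated by binomials (differences of two monomials), then for any term order the reduced Gröbner basis of I consists of binomials. -/

import Mathlib

open MvPolynomial

/-- A binomial: a difference of two monomials (possibly with coefficients, so
monomials and zero also count, as in Eisenbud–Sturmfels). -/
def IsBinomial {σ K : Type*} [Field K] (f : MvPolynomial σ K) : Prop :=
  ∃ a b : σ →₀ ℕ, ∃ c d : K, f = monomial a c - monomial b d

/-- The exponent of the lead term of `f` with respect to the monomial order `m`. -/
noncomputable def leadExp {σ K : Type*} [Field K] (m : MonomialOrder σ)
    (f : MvPolynomial σ K) : σ →₀ ℕ :=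
  m.toSyn.symm (f.support.sup fun a => m.toSyn a)

/-- `G` is a Gröbner basis of `I` w.r.t. `m`: `G ⊆ I` and the lead term of every nonzero
element of `I` is divisible by the lead term of some element of `G`. -/
def IsGroebnerBasis {σ K : Type*} [Field K] (m : MonomialOrder σ)
    (I : Ideal (MvPolynomial σ K)) (G : Finset (MvPolynomial σ K)) : Prop :=
  (↑G : Set (MvPolynomial σ K)) ⊆ I ∧
    ∀ f ∈ I, f ≠ 0 → ∃ g ∈ G, g ≠ 0 ∧ leadExp m g ≤ leadExp m f

/-- A reduced Gröbner basis: each element is monic, and no term of any element is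
divisible by the lead term of another element. -/
def IsReducedGroebnerBasis {σ K : Type*} [Field K] (m : MonomialOrder σ)
    (I : Ideal (MvPolynomial σ K)) (G : Finset (MvPolynomial σ K)) : Prop :=
  IsGroebnerBasis m I G ∧ (∀ g ∈ G, coeff (leadExp m g) g = 1) ∧
    ∀ g ∈ G, ∀ g' ∈ G, g ≠ g' → ∀ a ∈ g'.support, ¬ leadExp m g ≤ a

namespace BinomialGB

variable {σ K : Type*} [Field K]

attribute [local instance 2000] Classical.propDecidable






/-- Restriction of a polynomial to the exponents satisfying a predicate. -/
noncomputable def restr (p : (σ →₀ ℕ) → Prop) (f : MvPolynomial σ K) : MvPolynomial σ K :=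
  ∑ a ∈ f.support, if p a then monomial a (coeff a f) else 0

lemma coeff_restr (p : (σ →₀ ℕ) → Prop) (f : MvPolynomial σ K) (b : σ →₀ ℕ) :
    coeff b (restr p f) = if p b then coeff b f else 0 := by
  classical
  rw [restr, coeff_sum]
  rw [Finset.sum_congr rfl (fun a _ => show (coeff b (if p a then monomial a (coeff a f) else 0))
      = if a = b then (if p b then coeff b f else 0) else 0 by
    split_ifs with h1 h2 h3 <;>
      simp_all [coeff_monomial] )]
  rw [Finset.sum_ite_eq']
  by_cases hb : b ∈ f.support
  · simp [hb]
  · simp only [hb, if_neg, ite_eq_right_iff]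
    simp only [MvPolynomial.notMem_support_iff] at hb
    simp [hb]

lemma restr_add (p : (σ →₀ ℕ) → Prop) (f g : MvPolynomial σ K) :
    restr p (f + g) = restr p f + restr p g := by
  ext b
  simp only [coeff_add, coeff_restr]
  split_ifs <;> simp

lemma restr_smul (p : (σ →₀ ℕ) → Prop) (c : K) (f : MvPolynomial σ K) :
    restr p (c • f) = c • restr p f := by
  ext b
  simp only [coeff_smul, coeff_restr, smul_eq_mul]
  split_ifs <;> simp

lemma restr_monomial (p : (σ →₀ ℕ) → Prop) (u : σ →₀ ℕ) (c : K) :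
    restr p (monomial u c) = if p u then monomial u c else 0 := by
  ext b
  rw [coeff_restr, coeff_monomial]
  by_cases h : u = b
  · subst h; split_ifs <;> simp_all [coeff_monomial]
  · split_ifs <;> simp_all [coeff_monomial]

lemma restr_zero (p : (σ →₀ ℕ) → Prop) : restr p (0 : MvPolynomial σ K) = 0 := by
  ext b; simp [coeff_restr]

lemma support_restr_subset (p : (σ →₀ ℕ) → Prop) (f : MvPolynomial σ K) :
    (restr p f).support ⊆ f.support := by
  intro a ha
  rw [MvPolynomial.mem_support_iff] at ha ⊢
  rw [coeff_restr] at ha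
  intro h; apply ha; split_ifs <;> simp [h]







lemma leadExp_mem_support (m : MonomialOrder σ) {f : MvPolynomial σ K} (hf : f ≠ 0) :
    leadExp m f ∈ f.support := by
  have hne : f.support.Nonempty := by
    rwa [Finset.nonempty_iff_ne_empty, Ne, MvPolynomial.support_eq_empty]
  obtain ⟨a, ha, h⟩ := Finset.exists_mem_eq_sup f.support hne (fun a => m.toSyn a)
  rw [leadExp, h]
  simpa using ha

lemma le_leadExp (m : MonomialOrder σ) {f : MvPolynomial σ K} {a : σ →₀ ℕ}
    (ha : a ∈ f.support) : m.toSyn a ≤ m.toSyn (leadExp m f) := by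
  rw [leadExp, AddEquiv.apply_symm_apply]
  exact Finset.le_sup ha

/-- The congruence relation induced by the ideal on exponents. -/
def relI (I : Ideal (MvPolynomial σ K)) (u v : σ →₀ ℕ) : Prop :=
  ∃ c : K, c ≠ 0 ∧ (monomial u 1 - monomial v c) ∈ I

lemma relI_refl (I : Ideal (MvPolynomial σ K)) (u : σ →₀ ℕ) : relI I u u :=
  ⟨1, one_ne_zero, by simp⟩

lemma relI_symm {I : Ideal (MvPolynomial σ K)} {u v : σ →₀ ℕ} (h : relI I u v) : relI I v u := by
  obtain ⟨c, hc, hm⟩ := h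
  refine ⟨c⁻¹, inv_ne_zero hc, ?_⟩
  have : (monomial v (1:K) - monomial u c⁻¹) = (C (-c⁻¹)) * (monomial u 1 - monomial v c) := by
    rw [mul_sub, C_mul_monomial, C_mul_monomial]
    rw [mul_one, show (-c⁻¹) * c = -1 by rw [neg_mul, inv_mul_cancel₀ hc]]
    simp only [map_neg, sub_eq_add_neg]
    ring
  rw [this]
  exact I.mul_mem_left _ hm

lemma relI_trans {I : Ideal (MvPolynomial σ K)} {u v w : σ →₀ ℕ} (h1 : relI I u v)
    (h2 : relI I v w) : relI I u w := by
  obtain ⟨c, hc, hm1⟩ := h1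
  obtain ⟨d, hd, hm2⟩ := h2
  refine ⟨c * d, mul_ne_zero hc hd, ?_⟩
  have : (monomial u (1:K) - monomial w (c*d))
      = (monomial u 1 - monomial v c) + C c * (monomial v 1 - monomial w d) := by
    rw [mul_sub, C_mul_monomial, C_mul_monomial, mul_one]
    ring
  rw [this]
  exact I.add_mem hm1 (I.mul_mem_left _ hm2)






/-- The set of monomial multiples of elements of `S`. -/
def monMul (S : Set (MvPolynomial σ K)) : Set (MvPolynomial σ K) :=
  {f | ∃ a : σ →₀ ℕ, ∃ s ∈ S, f = monomial a 1 * s}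

lemma monomial_mul_mem_span (S : Set (MvPolynomial σ K)) (a : σ →₀ ℕ) (c : K)
    {f : MvPolynomial σ K} (hf : f ∈ Submodule.span K (monMul S)) :
    monomial a c * f ∈ Submodule.span K (monMul S) := by
  have key : ∀ f ∈ Submodule.span K (monMul S),
      monomial a (1:K) * f ∈ Submodule.span K (monMul S) := by
    intro f hf
    induction hf using Submodule.span_induction with
    | mem x hx =>
      obtain ⟨b, s, hs, rfl⟩ := hx
      apply Submodule.subset_span
      exact ⟨a + b, s, hs, by rw [← mul_assoc, monomial_mul, one_mul]⟩
    | zero => simp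
    | add x y _ _ hx hy => rw [mul_add]; exact Submodule.add_mem _ hx hy
    | smul c x _ hx => rw [mul_smul_comm]; exact Submodule.smul_mem _ _ hx
  have : monomial a c * f = c • (monomial a (1:K) * f) := by
    rw [← smul_mul_assoc, MvPolynomial.smul_monomial, smul_eq_mul, mul_one]
  rw [this]
  exact Submodule.smul_mem _ _ (key f hf)






lemma mul_mem_span (S : Set (MvPolynomial σ K)) (r : MvPolynomial σ K)
    {f : MvPolynomial σ K} (hf : f ∈ Submodule.span K (monMul S)) :
    r * f ∈ Submodule.span K (monMul S) := by
  induction r using MvPolynomial.induction_on' with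
  | monomial u c => exact monomial_mul_mem_span S u c hf
  | add p q hp hq => rw [add_mul]; exact Submodule.add_mem _ hp hq

lemma mem_span_monMul {S : Set (MvPolynomial σ K)} {f : MvPolynomial σ K}
    (hf : f ∈ Ideal.span S) : f ∈ Submodule.span K (monMul S) := by
  let J : Ideal (MvPolynomial σ K) :=
    { carrier := Submodule.span K (monMul S)
      add_mem' := fun ha hb => Submodule.add_mem _ ha hb
      zero_mem' := Submodule.zero_mem _
      smul_mem' := fun c x hx => by simpa [smul_eq_mul] using mul_mem_span S c hx }
  have hSJ : S ⊆ J := by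
    intro s hs
    apply Submodule.subset_span
    exact ⟨0, s, hs, by simp⟩
  exact Ideal.span_le.mpr hSJ hf


lemma restr_neg (p : (σ →₀ ℕ) → Prop) (f : MvPolynomial σ K) :
    restr p (-f) = -restr p f := by
  have := restr_smul p (-1 : K) f
  simpa using this

lemma restr_sub (p : (σ →₀ ℕ) → Prop) (f g : MvPolynomial σ K) :
    restr p (f - g) = restr p f - restr p g := by
  rw [sub_eq_add_neg, restr_add, restr_neg, sub_eq_add_neg]

lemma restr_mem {I : Ideal (MvPolynomial σ K)} {S : Set (MvPolynomial σ K)}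
    (hS : ∀ f ∈ S, IsBinomial f) (hI : I = Ideal.span S) (w : σ →₀ ℕ)
    {f : MvPolynomial σ K} (hf : f ∈ I) : restr (relI I w) f ∈ I := by
  have hfs : f ∈ Submodule.span K (monMul S) := mem_span_monMul (hI ▸ hf)
  clear hf
  induction hfs using Submodule.span_induction with
  | mem x hx =>
    obtain ⟨a, s, hs, rfl⟩ := hx
    obtain ⟨u, v, c, d, rfl⟩ := hS s hs
    have hxI : monomial a 1 * (monomial u c - monomial v d) ∈ I := by
      rw [hI]; exact Ideal.mul_mem_left _ _ (Ideal.subset_span hs)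
    rw [mul_sub, monomial_mul, one_mul, monomial_mul, one_mul] at hxI ⊢
    set A := a + u with hA
    set B := a + v with hB
    by_cases hc : c = 0
    · subst hc
      simp only [monomial_zero, zero_sub] at hxI ⊢
      rw [restr_neg, restr_monomial]
      split_ifs
      · exact hxI
      · simp
    by_cases hd : d = 0
    · subst hd
      simp only [monomial_zero, sub_zero] at hxI ⊢
      rw [restr_monomial]
      split_ifs
      · exact hxI
      · exact I.zero_mem
    by_cases hAB : A = B
    · rw [← hAB, ← map_sub, restr_monomial]
      rw [← hAB, ← map_sub] at hxI
      split_ifs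
      · exact hxI
      · exact I.zero_mem
    · have hrel : relI I A B := by
        refine ⟨c⁻¹ * d, mul_ne_zero (inv_ne_zero hc) hd, ?_⟩
        have : (monomial A (1:K) - monomial B (c⁻¹ * d))
            = C c⁻¹ * (monomial A c - monomial B d) := by
          rw [mul_sub, C_mul_monomial, C_mul_monomial, inv_mul_cancel₀ hc]
        rw [this]
        exact I.mul_mem_left _ hxI
      have hiff : relI I w A ↔ relI I w B :=
        ⟨fun h => relI_trans h hrel, fun h => relI_trans h (relI_symm hrel)⟩
      rw [restr_sub, restr_monomial, restr_monomial]
      split_ifs with h1 h2 h2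
      · exact hxI
      · exact absurd (hiff.mp h1) h2
      · exact absurd (hiff.mpr h2) h1
      · simp
  | zero => rw [restr_zero]; exact I.zero_mem
  | add x y _ _ hx hy => rw [restr_add]; exact I.add_mem hx hy
  | smul c x _ hx =>
    rw [restr_smul, MvPolynomial.smul_eq_C_mul]
    exact I.mul_mem_left _ hx

lemma eq_zero_of_support (m : MonomialOrder σ) {I : Ideal (MvPolynomial σ K)}
    {G : Finset (MvPolynomial σ K)} (hG : IsGroebnerBasis m I G) {f : MvPolynomial σ K}
    (hf : f ∈ I) (h : ∀ a ∈ f.support, ∀ g ∈ G, ¬ leadExp m g ≤ a) : f = 0 := by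
  by_contra h0
  obtain ⟨g, hgG, hg0, hle⟩ := hG.2 f hf h0
  exact h _ (leadExp_mem_support m h0) g hgG hle

end BinomialGB

open BinomialGB in
/-- If an ideal of a polynomial ring is generated by binomials, then for any term order
its reduced Gröbner basis consists of binomials. -/
theorem stmt1 {σ K : Type*} [Field K] [Fintype σ] (m : MonomialOrder σ)
    (I : Ideal (MvPolynomial σ K)) (S : Set (MvPolynomial σ K))
    (hS : ∀ f ∈ S, IsBinomial f) (hI : I = Ideal.span S)
    (G : Finset (MvPolynomial σ K)) (hG : IsReducedGroebnerBasis m I G) :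
    ∀ g ∈ G, IsBinomial g := by
  classical
  intro g hgG
  obtain ⟨⟨hGI, hGB⟩, hmonic, hred⟩ := hG
  have hgI : g ∈ I := hGI hgG
  set α := leadExp m g with hα
  have hcα : coeff α g = 1 := hmonic g hgG
  have hαs : α ∈ g.support := by
    rw [MvPolynomial.mem_support_iff, hcα]; exact one_ne_zero
  have tailN : ∀ a ∈ g.support, a ≠ α → ∀ g' ∈ G, ¬ leadExp m g' ≤ a := by
    intro a ha hne g' hg'
    by_cases hgg : g' = g
    · subst hgg
      intro hle
      have h1 := m.toSyn_monotone hle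
      have h2 := le_leadExp m ha
      exact hne (m.toSyn.injective (le_antisymm h2 h1))
    · exact hred g' hg' g hgG hgg a ha
  have hrelα : ∀ u ∈ g.support, u ≠ α → relI I u α := by
    intro u hu hne
    by_contra hna
    have hr := restr_mem hS hI u hgI
    have hz : restr (relI I u) g = 0 := by
      apply eq_zero_of_support m ⟨hGI, hGB⟩ hr
      intro a ha
      have has : a ∈ g.support := support_restr_subset _ _ ha
      have hane : a ≠ α := by
        rintro rfl
        apply hna
        rw [MvPolynomial.mem_support_iff, coeff_restr] at ha
        by_contra hp
        simp [hp] at ha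
      exact tailN a has hane
    have hcu : coeff u (restr (relI I u) g) = coeff u g := by
      rw [coeff_restr, if_pos (relI_refl I u)]
    rw [hz, coeff_zero] at hcu
    exact (MvPolynomial.mem_support_iff.mp hu) hcu.symm
  have htail : ∀ u ∈ g.support, ∀ v ∈ g.support, u ≠ α → v ≠ α → u = v := by
    intro u hu v hv hune hvne
    by_contra huv
    have hrel : relI I u v := relI_trans (hrelα u hu hune) (relI_symm (hrelα v hv hvne))
    obtain ⟨c, hc, hmem⟩ := hrel
    have hf0 : (monomial u (1:K) - monomial v c) ≠ 0 := by
      intro h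
      have h1 := congrArg (coeff u) h
      rw [coeff_sub, coeff_monomial, coeff_monomial, if_pos rfl,
        if_neg (fun h' => huv h'.symm), coeff_zero, sub_zero] at h1
      exact one_ne_zero h1
    apply hf0
    apply eq_zero_of_support m ⟨hGI, hGB⟩ hmem
    intro a ha
    have hauv : a = u ∨ a = v := by
      have h1 := MvPolynomial.support_sub σ (monomial u (1:K)) (monomial v c) ha
      rw [Finset.mem_union] at h1
      rcases h1 with h1 | h1
      · exact Or.inl (by simpa using MvPolynomial.support_monomial_subset h1)
      · exact Or.inr (by simpa using MvPolynomial.support_monomial_subset h1)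
    rcases hauv with rfl | rfl
    · exact tailN _ hu hune
    · exact tailN _ hv hvne
  by_cases hT : ∃ β ∈ g.support, β ≠ α
  · obtain ⟨β, hβ, hβne⟩ := hT
    refine ⟨α, β, 1, -(coeff β g), ?_⟩
    ext x
    rw [coeff_sub, coeff_monomial, coeff_monomial]
    by_cases hxα : x = α
    · subst hxα
      rw [if_pos rfl, if_neg hβne, hcα, sub_zero]
    · by_cases hxβ : x = β
      · subst hxβ
        rw [if_neg (fun h => hxα h.symm), if_pos rfl]
        ring
      · have hx : x ∉ g.support := fun hx => hxβ (htail x hx β hβ hxα hβne)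
        rw [MvPolynomial.notMem_support_iff.mp hx,
          if_neg (fun h => hxα h.symm), if_neg (fun h => hxβ h.symm)]
        ring
  · push_neg at hT
    refine ⟨α, α, 1, 0, ?_⟩
    ext x
    rw [coeff_sub, coeff_monomial, coeff_monomial]
    by_cases hxα : x = α
    · subst hxα
      rw [if_pos rfl, if_pos rfl, hcα, sub_zero]
    · have hx : x ∉ g.support := fun hx => hxα (hT x hx)
      rw [MvPolynomial.notMem_support_iff.mp hx,
        if_neg (fun h => hxα h.symm), if_neg (fun h => hxα h.symm)]
      ring
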